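/- Let (Ω, 𝒜, P) be a probability space, X, Y : Ω → ℝ random variables with Y non-degenerate, and φ : [−1,1] → ℝ convex and strictly convex at 0 with φ(0) = 0. If ∫_{ℝ×ℝ} ∫_ℝ φ(F_{Y|X=x₁}(y) − F_{Y|X=x₂}(y)) dP^Y(y) d(P^X ⊗ P^X)(x₁,x₂) = ∫_{ℝ×ℝ} ∫_ℝ φ(𝟙_{\{y₁ ≤ y\}} − 𝟙_{\{y₂ ≤ y\}}) dP^Y(y) d(P^Y ⊗ P^Y)(y₁,y₂), then Y is completely dependent on X, i.e., there exists a Borel measurable f : ℝ → ℝ with Y = f(X) P-almost surely. -/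

import Mathlib

open MeasureTheory ProbabilityTheory Filter Set
open scoped ENNReal Topology

section Helpers

section Phi

/-- two-step Jensen: φ(a-b) ≤ a φ(1) + b φ(-1) for a,b ≥ 0, a+b ≤ 1. -/
lemma jensen3 {φ : ℝ → ℝ} (hφ : ConvexOn ℝ (Set.Icc (-1 : ℝ) 1) φ) (hφ0 : φ 0 = 0)
    {a b : ℝ} (ha : 0 ≤ a) (hb : 0 ≤ b) (hab : a + b ≤ 1) :
    φ (a - b) ≤ a * φ 1 + b * φ (-1) := by
  rcases eq_or_lt_of_le (by linarith : (0:ℝ) ≤ a + b) with h0 | hpos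
  · have ha0 : a = 0 := by linarith
    have hb0 : b = 0 := by linarith
    simp [ha0, hb0, hφ0]
  · set t := a + b with ht
    have h1 : φ (a - b) = φ (t * ((a - b)/t) + (1 - t) * 0) := by
      field_simp
      simp
    have hmem : (a - b)/t ∈ Set.Icc (-1:ℝ) 1 := by
      constructor
      · rw [le_div_iff₀ hpos]; nlinarith
      · rw [div_le_one hpos]; nlinarith
    have h2 : φ (t * ((a - b)/t) + (1 - t) * 0) ≤ t * φ ((a-b)/t) + (1-t) * φ 0 := by
      have := hφ.2 hmem (by constructor <;> norm_num : (0:ℝ) ∈ Set.Icc (-1:ℝ) 1)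
        (le_of_lt hpos) (by linarith : (0:ℝ) ≤ 1 - t) (by ring)
      simpa [smul_eq_mul] using this
    have h3 : φ ((a-b)/t) ≤ (a/t) * φ 1 + (b/t) * φ (-1) := by
      have e : (a-b)/t = (a/t) * 1 + (b/t) * (-1) := by field_simp; ring
      have := hφ.2 (by constructor <;> norm_num : (1:ℝ) ∈ Set.Icc (-1:ℝ) 1)
        (by constructor <;> norm_num : (-1:ℝ) ∈ Set.Icc (-1:ℝ) 1)
        (div_nonneg ha hpos.le) (div_nonneg hb hpos.le)
        (by field_simp; exact ht.symm)
      rw [e]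
      simpa [smul_eq_mul] using this
    calc φ (a-b) = φ (t * ((a - b)/t) + (1 - t) * 0) := h1
      _ ≤ t * φ ((a-b)/t) + (1-t) * φ 0 := h2
      _ ≤ t * ((a/t) * φ 1 + (b/t) * φ (-1)) + (1-t) * φ 0 := by
          nlinarith [h3]
      _ = a * φ 1 + b * φ (-1) := by rw [hφ0]; field_simp; ring

lemma key2 {φ : ℝ → ℝ} (hφ : ConvexOn ℝ (Set.Icc (-1 : ℝ) 1) φ) (hφ0 : φ 0 = 0)
    {u v : ℝ} (hu : u ∈ Set.Icc (0:ℝ) 1) (hv : v ∈ Set.Icc (0:ℝ) 1) :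
    φ (u - v) ≤ u * (1 - v) * φ 1 + v * (1 - u) * φ (-1) := by
  have := jensen3 hφ hφ0 (a := u * (1-v)) (b := v * (1-u))
    (by nlinarith [hu.1, hu.2, hv.1, hv.2]) (by nlinarith [hu.1, hu.2, hv.1, hv.2])
    (by nlinarith [hu.1, hu.2, hv.1, hv.2])
  have e : u * (1-v) - v * (1-u) = u - v := by ring
  rwa [e] at this

lemma key3 {φ : ℝ → ℝ} (hφ : ConvexOn ℝ (Set.Icc (-1 : ℝ) 1) φ) (hφ0 : φ 0 = 0)
    (hφs : 0 < φ 1 + φ (-1)) {u v : ℝ} (hu : u ∈ Set.Ioo (0:ℝ) 1) (hv : v ∈ Set.Ioo (0:ℝ) 1) :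
    φ (u - v) < u * (1 - v) * φ 1 + v * (1 - u) * φ (-1) := by
  set a := u * (1-v) with hadef
  set b := v * (1-u) with hbdef
  have ha : 0 < a := by nlinarith [hu.1, hu.2, hv.1, hv.2]
  have hb : 0 < b := by nlinarith [hu.1, hu.2, hv.1, hv.2]
  have hab : a + b ≤ 1 := by nlinarith [hu.1, hu.2, hv.1, hv.2]
  have e : u - v = a - b := by rw [hadef, hbdef]; ring
  rw [e]
  rcases le_total a b with h | h
  · have h1 : φ (a - b) ≤ 0 * φ 1 + (b - a) * φ (-1) := by
      have := jensen3 hφ hφ0 (a := (0:ℝ)) (b := b - a) le_rfl (by linarith) (by linarith)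
      simpa using this
    nlinarith
  · have h1 : φ (a - b) ≤ (a - b) * φ 1 + 0 * φ (-1) := by
      have := jensen3 hφ hφ0 (a := a - b) (b := (0:ℝ)) (by linarith) le_rfl (by linarith)
      simpa using this
    nlinarith

lemma phi_bound {φ : ℝ → ℝ} (hφ : ConvexOn ℝ (Set.Icc (-1 : ℝ) 1) φ) (hφ0 : φ 0 = 0)
    {t : ℝ} (ht : t ∈ Set.Icc (-1:ℝ) 1) : |φ t| ≤ |φ 1| + |φ (-1)| := by
  have hub : ∀ s ∈ Set.Icc (-1:ℝ) 1, φ s ≤ max (φ 1) (φ (-1)) := by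
    intro s hs
    have e : s = ((1+s)/2) * 1 + ((1-s)/2) * (-1) := by ring
    have := hφ.2 (by constructor <;> norm_num : (1:ℝ) ∈ Set.Icc (-1:ℝ) 1)
      (by constructor <;> norm_num : (-1:ℝ) ∈ Set.Icc (-1:ℝ) 1)
      (by linarith [hs.1] : (0:ℝ) ≤ (1+s)/2) (by linarith [hs.2] : (0:ℝ) ≤ (1-s)/2)
      (by ring)
    calc φ s = φ (((1+s)/2) * 1 + ((1-s)/2) * (-1)) := by rw [← e]
      _ ≤ ((1+s)/2) * φ 1 + ((1-s)/2) * φ (-1) := by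
          simpa [smul_eq_mul] using this
      _ ≤ max (φ 1) (φ (-1)) := by
          nlinarith [le_max_left (φ 1) (φ (-1)), le_max_right (φ 1) (φ (-1)), hs.1, hs.2]
  have hm : max (φ 1) (φ (-1)) ≤ |φ 1| + |φ (-1)| := by
    rcases max_cases (φ 1) (φ (-1)) with ⟨h,_⟩|⟨h,_⟩ <;> rw [h]
    · nlinarith [le_abs_self (φ 1), abs_nonneg (φ (-1))]
    · nlinarith [le_abs_self (φ (-1)), abs_nonneg (φ 1)]
  have h1 : φ t ≤ max (φ 1) (φ (-1)) := hub t ht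
  have hmt : -t ∈ Set.Icc (-1:ℝ) 1 := by constructor <;> [linarith [ht.2]; linarith [ht.1]]
  have h2 : -φ (-t) ≤ φ t := by
    have := hφ.2 ht hmt (by norm_num : (0:ℝ) ≤ (1:ℝ)/2) (by norm_num : (0:ℝ) ≤ (1:ℝ)/2) (by norm_num)
    have e : ((1:ℝ)/2) • t + ((1:ℝ)/2) • (-t) = 0 := by simp
    rw [e, hφ0] at this
    simp only [smul_eq_mul] at this
    linarith
  have h3 : φ (-t) ≤ max (φ 1) (φ (-1)) := hub (-t) hmt
  rw [abs_le]
  constructor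
  · linarith
  · linarith

end Phi

lemma measurable_phi_comp {φ : ℝ → ℝ} (hc : ContinuousOn φ (Set.Ioo (-1:ℝ) 1))
    {α : Type*} [MeasurableSpace α] {d : α → ℝ} (hd : Measurable d)
    (hr : ∀ a, d a ∈ Set.Icc (-1:ℝ) 1) : Measurable fun a => φ (d a) := by
  classical
  set g : ℝ → ℝ := fun t => if t ∈ Set.Ioo (-1:ℝ) 1 then φ t else if t = 1 then φ 1 else φ (-1)
    with hgdef
  have hgm : Measurable g := by
    apply measurable_of_isOpen
    intro s hs
    have hset : g ⁻¹' s = (Set.Ioo (-1:ℝ) 1 ∩ φ ⁻¹' s) ∪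
        ({t : ℝ | t = 1 ∧ φ 1 ∈ s} ∪
         {t : ℝ | t ∉ Set.Ioo (-1:ℝ) 1 ∧ t ≠ 1 ∧ φ (-1) ∈ s}) := by
      ext t
      simp only [Set.mem_union, Set.mem_inter_iff, Set.mem_preimage, Set.mem_setOf_eq, hgdef]
      split_ifs with h1 h2
      · have ht1 : ¬ (t = 1) := by rintro rfl; exact absurd h1.2 (lt_irrefl 1)
        tauto
      · subst h2
        have : (1:ℝ) ∉ Set.Ioo (-1:ℝ) 1 := by simp
        tauto
      · tauto
    rw [hset]
    refine MeasurableSet.union ?_ (MeasurableSet.union ?_ ?_)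
    · exact (hc.isOpen_inter_preimage isOpen_Ioo hs).measurableSet
    · by_cases h : φ 1 ∈ s
      · have : {t : ℝ | t = 1 ∧ φ 1 ∈ s} = {1} := by ext; simp [h]
        rw [this]; exact measurableSet_singleton 1
      · have : {t : ℝ | t = 1 ∧ φ 1 ∈ s} = ∅ := by ext; simp [h]
        rw [this]; exact MeasurableSet.empty
    · by_cases h : φ (-1) ∈ s
      · have : {t : ℝ | t ∉ Set.Ioo (-1:ℝ) 1 ∧ t ≠ 1 ∧ φ (-1) ∈ s}
            = (Set.Ioo (-1:ℝ) 1)ᶜ ∩ ({1}ᶜ : Set ℝ) := by ext; simp [h, and_comm]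
        rw [this]
        exact measurableSet_Ioo.compl.inter (measurableSet_singleton 1).compl
      · have : {t : ℝ | t ∉ Set.Ioo (-1:ℝ) 1 ∧ t ≠ 1 ∧ φ (-1) ∈ s} = ∅ := by ext; simp [h]
        rw [this]; exact MeasurableSet.empty
  have : (fun a => φ (d a)) = fun a => g (d a) := by
    funext a
    rcases hr a with ⟨hl, hu⟩
    by_cases h1 : d a ∈ Set.Ioo (-1:ℝ) 1
    · rw [hgdef]
      simp only
      rw [if_pos h1]
    · have hcase : d a = -1 ∨ d a = 1 := by
        rcases lt_or_eq_of_le hl with h | h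
        · rcases lt_or_eq_of_le hu with h' | h'
          · exact absurd ⟨h, h'⟩ h1
          · exact Or.inr h'
        · exact Or.inl h.symm
      rw [hgdef]
      simp only
      rw [if_neg h1]
      rcases hcase with h | h
      · have : ¬ (d a = 1) := by rw [h]; norm_num
        rw [if_neg this, h]
      · rw [if_pos h, h]
  rw [this]
  exact hgm.comp hd

lemma int_of_bdd {α : Type*} [MeasurableSpace α] {m : Measure α} [IsFiniteMeasure m]
    {f : α → ℝ} (hm : AEStronglyMeasurable f m) {C : ℝ} (h : ∀ a, |f a| ≤ C) :
    Integrable f m :=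
  Integrable.mono' (integrable_const C) hm (Filter.Eventually.of_forall fun a => by
    simpa [Real.norm_eq_abs] using h a)

lemma exists_countable_right_dense (G : Set ℝ) :
    ∃ D : Set ℝ, D ⊆ G ∧ D.Countable ∧ ∀ c ∈ G, ∀ ε > 0, ∃ x ∈ D, c ≤ x ∧ x < c + ε := by
  classical
  set D₂ := {c | c ∈ G ∧ ∃ ε, 0 < ε ∧ G ∩ Set.Ioo c (c+ε) = ∅} with hD₂def
  have hD₂c : D₂.Countable := by
    set r : ℝ → ℝ := fun c => if h : ∃ ε, 0 < ε ∧ G ∩ Set.Ioo c (c+ε) = ∅ then c + h.choose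
      else c + 1 with hrdef
    have hrc : ∀ c ∈ D₂, c < r c ∧ G ∩ Set.Ioo c (r c) = ∅ := by
      intro c hc
      rcases hc with ⟨_, hex⟩
      rw [hrdef]
      simp only [dif_pos hex]
      exact ⟨by linarith [hex.choose_spec.1], hex.choose_spec.2⟩
    have key : ∀ c ∈ D₂, ∀ c' ∈ D₂, c < c' →
        Disjoint (Set.Ioo c (r c)) (Set.Ioo c' (r c')) := by
      intro c hc c' hc' h
      have hle : r c ≤ c' := by
        by_contra hlt
        push_neg at hlt
        have : c' ∈ G ∩ Set.Ioo c (r c) := ⟨hc'.1, h, hlt⟩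
        rw [(hrc c hc).2] at this
        exact this
      rw [Set.disjoint_left]
      rintro u ⟨_, hu2⟩ ⟨hu3, _⟩
      linarith
    apply Set.PairwiseDisjoint.countable_of_Ioo (y := r) ?_ (fun c hc => (hrc c hc).1)
    intro c hc c' hc' hne
    rcases lt_or_gt_of_ne hne with h | h
    · exact key c hc c' hc' h
    · exact (key c' hc' c hc h).symm
  set d : ℚ × ℚ → ℝ := fun q =>
    if h : (G ∩ Set.Ioo (q.1:ℝ) (q.2:ℝ)).Nonempty then h.choose else 0 with hddef
  refine ⟨(Set.range d ∩ G) ∪ D₂, ?_, ?_, ?_⟩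
  · intro x hx
    rcases hx with h | h
    · exact h.2
    · exact h.1
  · exact ((Set.countable_range d).mono Set.inter_subset_left).union hD₂c
  · intro c hc ε hε
    by_cases hc2 : c ∈ D₂
    · exact ⟨c, Or.inr hc2, le_refl c, by linarith⟩
    · have hne : ∀ ε' > 0, (G ∩ Set.Ioo c (c+ε')).Nonempty := by
        intro ε' hε'
        by_contra hempty
        rw [Set.not_nonempty_iff_eq_empty] at hempty
        exact hc2 ⟨hc, ε', hε', hempty⟩
      obtain ⟨g, hgG, hg1, hg2⟩ := hne (ε/2) (by linarith)
      obtain ⟨p, hp1, hp2⟩ := exists_rat_btwn hg1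
      obtain ⟨p', hp'1, hp'2⟩ := exists_rat_btwn (show g < c + ε by linarith)
      have hnem : (G ∩ Set.Ioo ((p:ℝ)) ((p':ℝ))).Nonempty := ⟨g, hgG, hp2, hp'1⟩
      have hd : d (p, p') ∈ G ∩ Set.Ioo ((p:ℝ)) ((p':ℝ)) := by
        rw [hddef]
        simp only [dif_pos hnem]
        exact hnem.choose_spec
      refine ⟨d (p, p'), Or.inl ⟨⟨(p, p'), rfl⟩, hd.1⟩, ?_, ?_⟩
      · linarith [hd.2.1]
      · linarith [hd.2.2]

lemma psi_bound {u v c₁ c₂ : ℝ} (hu : u ∈ Set.Icc (0:ℝ) 1) (hv : v ∈ Set.Icc (0:ℝ) 1) :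
    |u * (1 - v) * c₁ + v * (1 - u) * c₂| ≤ |c₁| + |c₂| := by
  have h1 : |u * (1 - v) * c₁| ≤ |c₁| := by
    rw [abs_mul]
    have : |u * (1 - v)| ≤ 1 := by
      rw [abs_mul]
      have := hu.1; have := hu.2; have := hv.1; have := hv.2
      nlinarith [abs_of_nonneg (by linarith : (0:ℝ) ≤ u),
        abs_of_nonneg (by linarith : (0:ℝ) ≤ 1 - v)]
    nlinarith [abs_nonneg c₁, abs_nonneg (u * (1-v))]
  have h2 : |v * (1 - u) * c₂| ≤ |c₂| := by
    rw [abs_mul]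
    have : |v * (1 - u)| ≤ 1 := by
      rw [abs_mul]
      have := hu.1; have := hu.2; have := hv.1; have := hv.2
      nlinarith [abs_of_nonneg (by linarith : (0:ℝ) ≤ v),
        abs_of_nonneg (by linarith : (0:ℝ) ≤ 1 - u)]
    nlinarith [abs_nonneg c₂, abs_nonneg (v * (1-u))]
  calc |u * (1 - v) * c₁ + v * (1 - u) * c₂| ≤ |u * (1 - v) * c₁| + |v * (1 - u) * c₂| :=
        abs_add_le _ _
    _ ≤ |c₁| + |c₂| := by linarith

lemma struct {ρ ν : Measure ℝ} [IsProbabilityMeasure ρ] [IsProbabilityMeasure ν]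
    {G : ℝ → ℝ → ℝ} (hG : Measurable fun p : ℝ × ℝ => G p.1 p.2)
    (hr : ∀ x y, G x y ∈ Set.Icc (0:ℝ) 1)
    {H : ℝ → ℝ} (hH : ∀ y, ∫ x, G x y ∂ρ = H y) (c₁ c₂ : ℝ) :
    ∫ p : ℝ × ℝ, (∫ y, (G p.1 y * (1 - G p.2 y) * c₁ + G p.2 y * (1 - G p.1 y) * c₂) ∂ν)
        ∂(ρ.prod ρ)
      = (c₁ + c₂) * ∫ y, H y * (1 - H y) ∂ν := by
  have hGy : ∀ y, Measurable fun x => G x y := fun y =>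
    hG.comp (measurable_id.prodMk measurable_const)
  have hGint : ∀ y, Integrable (fun x => G x y) ρ := fun y =>
    int_of_bdd (hGy y).aestronglyMeasurable (C := 1)
      (fun x => abs_le.mpr ⟨by linarith [(hr x y).1], (hr x y).2⟩)
  have h1G : ∀ y, ∫ x, (1 - G x y) ∂ρ = 1 - H y := by
    intro y
    rw [integral_sub (integrable_const 1) (hGint y), integral_const, hH y]
    simp
  -- joint measurability of the big integrand
  have m1 : Measurable fun q : (ℝ × ℝ) × ℝ => G q.1.1 q.2 :=
    hG.comp ((measurable_fst.fst).prodMk measurable_snd)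
  have m2 : Measurable fun q : (ℝ × ℝ) × ℝ => G q.1.2 q.2 :=
    hG.comp ((measurable_fst.snd).prodMk measurable_snd)
  have mΨ : Measurable fun q : (ℝ × ℝ) × ℝ =>
      G q.1.1 q.2 * (1 - G q.1.2 q.2) * c₁ + G q.1.2 q.2 * (1 - G q.1.1 q.2) * c₂ :=
    ((m1.mul (measurable_const.sub m2)).mul_const c₁).add
      ((m2.mul (measurable_const.sub m1)).mul_const c₂)
  have hbdd : ∀ (u v : ℝ), u ∈ Set.Icc (0:ℝ) 1 → v ∈ Set.Icc (0:ℝ) 1 →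
      |u * (1 - v) * c₁ + v * (1 - u) * c₂| ≤ |c₁| + |c₂| := by
    intro u v hu hv
    have h1 : |u * (1 - v) * c₁| ≤ |c₁| := by
      rw [abs_mul]
      have : |u * (1 - v)| ≤ 1 := by
        rw [abs_mul]
        have := hu.1; have := hu.2; have := hv.1; have := hv.2
        nlinarith [abs_of_nonneg (by linarith : (0:ℝ) ≤ u),
          abs_of_nonneg (by linarith : (0:ℝ) ≤ 1 - v)]
      nlinarith [abs_nonneg c₁, abs_nonneg (u * (1-v))]
    have h2 : |v * (1 - u) * c₂| ≤ |c₂| := by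
      rw [abs_mul]
      have : |v * (1 - u)| ≤ 1 := by
        rw [abs_mul]
        have := hu.1; have := hu.2; have := hv.1; have := hv.2
        nlinarith [abs_of_nonneg (by linarith : (0:ℝ) ≤ v),
          abs_of_nonneg (by linarith : (0:ℝ) ≤ 1 - u)]
      nlinarith [abs_nonneg c₂, abs_nonneg (v * (1-u))]
    calc |u * (1 - v) * c₁ + v * (1 - u) * c₂| ≤ |u * (1 - v) * c₁| + |v * (1 - u) * c₂| :=
          abs_add_le _ _
      _ ≤ |c₁| + |c₂| := by linarith
  have hint : Integrable
      (Function.uncurry fun (p : ℝ × ℝ) (y : ℝ) =>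
        G p.1 y * (1 - G p.2 y) * c₁ + G p.2 y * (1 - G p.1 y) * c₂) ((ρ.prod ρ).prod ν) := by
    apply int_of_bdd (C := |c₁| + |c₂|)
    · exact mΨ.aestronglyMeasurable
    · intro q
      exact hbdd _ _ (hr q.1.1 q.2) (hr q.1.2 q.2)
  rw [integral_integral_swap hint]
  have hinner : ∀ y, (∫ p : ℝ × ℝ, (G p.1 y * (1 - G p.2 y) * c₁ + G p.2 y * (1 - G p.1 y) * c₂)
      ∂(ρ.prod ρ)) = (H y * (1 - H y)) * (c₁ + c₂) := by
    intro y
    have i1 : Integrable (fun p : ℝ × ℝ => G p.1 y * (1 - G p.2 y)) (ρ.prod ρ) := by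
      apply int_of_bdd (C := 1)
      · exact ((hG.comp ((measurable_fst).prodMk measurable_const)).mul
          (measurable_const.sub (hG.comp ((measurable_snd).prodMk measurable_const)))).aestronglyMeasurable
      · intro p
        have hu := hr p.1 y; have hv := hr p.2 y
        rw [abs_mul]
        nlinarith [abs_of_nonneg hu.1, abs_of_nonneg (by linarith [hv.2] : (0:ℝ) ≤ 1 - G p.2 y),
          hu.1, hu.2, hv.1, hv.2, abs_of_nonneg (hu.1 : (0:ℝ) ≤ G p.1 y)]
    have i2 : Integrable (fun p : ℝ × ℝ => G p.2 y * (1 - G p.1 y)) (ρ.prod ρ) := by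
      apply int_of_bdd (C := 1)
      · exact ((hG.comp ((measurable_snd).prodMk measurable_const)).mul
          (measurable_const.sub (hG.comp ((measurable_fst).prodMk measurable_const)))).aestronglyMeasurable
      · intro p
        have hu := hr p.1 y; have hv := hr p.2 y
        rw [abs_mul]
        nlinarith [abs_of_nonneg hv.1, abs_of_nonneg (by linarith [hu.2] : (0:ℝ) ≤ 1 - G p.1 y),
          hu.1, hu.2, hv.1, hv.2]
    rw [integral_add (i1.mul_const c₁) (i2.mul_const c₂), integral_mul_const, integral_mul_const]
    have e1 : ∫ p : ℝ × ℝ, G p.1 y * (1 - G p.2 y) ∂(ρ.prod ρ)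
        = (∫ x, G x y ∂ρ) * (∫ x, (1 - G x y) ∂ρ) :=
      integral_prod_mul (fun x => G x y) (fun x => 1 - G x y)
    have e2 : ∫ p : ℝ × ℝ, G p.2 y * (1 - G p.1 y) ∂(ρ.prod ρ)
        = (∫ x, (1 - G x y) ∂ρ) * (∫ x, G x y ∂ρ) := by
      have : (fun p : ℝ × ℝ => G p.2 y * (1 - G p.1 y))
          = fun p : ℝ × ℝ => (1 - G p.1 y) * G p.2 y := by
        funext p; ring
      rw [this]
      exact integral_prod_mul (fun x => 1 - G x y) (fun x => G x y)
    rw [e1, e2, hH y, h1G y]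
    ring
  calc ∫ y, (∫ p : ℝ × ℝ, (G p.1 y * (1 - G p.2 y) * c₁ + G p.2 y * (1 - G p.1 y) * c₂)
        ∂(ρ.prod ρ)) ∂ν
      = ∫ y, (H y * (1 - H y)) * (c₁ + c₂) ∂ν := by
        apply integral_congr_ae
        exact Filter.Eventually.of_forall hinner
    _ = (∫ y, H y * (1 - H y) ∂ν) * (c₁ + c₂) := integral_mul_const _ _
    _ = (c₁ + c₂) * ∫ y, H y * (1 - H y) ∂ν := by ring

end Helpers

/-- If the sensitivity functional of conditional distribution
functions attains its maximal value (the normalizing integral), then Y is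
completely dependent on X. -/
theorem stmt8 {Ω : Type*} [MeasurableSpace Ω] (P : Measure Ω) [IsProbabilityMeasure P]
    (X Y : Ω → ℝ) (hX : Measurable X) (hY : Measurable Y)
    (hYnondeg : ∀ c : ℝ, P.map Y ≠ Measure.dirac c)
    (κ : Kernel ℝ ℝ) [IsMarkovKernel κ]
    (hκ : ∀ A B : Set ℝ, MeasurableSet A → MeasurableSet B →
      P.map (fun ω => (X ω, Y ω)) (A ×ˢ B) = ∫⁻ x in A, κ x B ∂(P.map X))
    (φ : ℝ → ℝ) (hφ : ConvexOn ℝ (Set.Icc (-1 : ℝ) 1) φ) (hφ0 : φ 0 = 0)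
    (hφstrict : ∀ ε : ℝ, 0 < ε → ε ≤ 1 → φ 0 < (φ (-ε) + φ ε) / 2)
    (heq : ∫ x : ℝ × ℝ, (∫ y, φ ((κ x.1 (Set.Iic y)).toReal - (κ x.2 (Set.Iic y)).toReal)
              ∂(P.map Y)) ∂((P.map X).prod (P.map X)) =
        ∫ p : ℝ × ℝ, (∫ y, φ ((if p.1 ≤ y then (1 : ℝ) else 0) - (if p.2 ≤ y then (1 : ℝ) else 0))
              ∂(P.map Y)) ∂((P.map Y).prod (P.map Y))) :
    ∃ f : ℝ → ℝ, Measurable f ∧ ∀ᵐ ω ∂P, Y ω = f (X ω) := by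
  classical
  set μ : Measure ℝ := P.map X with hμdef
  set ν : Measure ℝ := P.map Y with hνdef
  haveI hμP : IsProbabilityMeasure μ := Measure.isProbabilityMeasure_map hX.aemeasurable
  haveI hνP : IsProbabilityMeasure ν := Measure.isProbabilityMeasure_map hY.aemeasurable
  set F : ℝ → ℝ → ℝ := fun x y => (κ x (Set.Iic y)).toReal with hFdef
  have hκ1 : ∀ x (y : ℝ), κ x (Set.Iic y) ≤ 1 := fun x y => prob_le_one
  have hκfin : ∀ x (y : ℝ), κ x (Set.Iic y) ≠ ∞ :=
    fun x y => (lt_of_le_of_lt (hκ1 x y) ENNReal.one_lt_top).ne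
  have hFrange : ∀ x y, F x y ∈ Set.Icc (0:ℝ) 1 := by
    intro x y
    refine ⟨ENNReal.toReal_nonneg, ?_⟩
    calc (κ x (Set.Iic y)).toReal ≤ (1 : ℝ≥0∞).toReal :=
          ENNReal.toReal_mono ENNReal.one_ne_top (hκ1 x y)
      _ = 1 := by simp
  have hFxmeas : ∀ y, Measurable fun x => F x y :=
    fun y => (Kernel.measurable_coe κ measurableSet_Iic).ennreal_toReal
  have hFj : Measurable fun p : ℝ × ℝ => F p.1 p.2 := by
    have ht : MeasurableSet {q : (ℝ × ℝ) × ℝ | q.2 ≤ q.1.2} :=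
      measurableSet_le measurable_snd (measurable_fst.snd)
    have h := Kernel.measurable_kernel_prodMk_left
      (κ := (@Kernel.comap ℝ ℝ Real.measurableSpace Real.measurableSpace (ℝ × ℝ)
        Prod.instMeasurableSpace κ Prod.fst measurable_fst)) ht
    have heqf : (fun a : ℝ × ℝ => (@Kernel.comap ℝ ℝ Real.measurableSpace Real.measurableSpace
        (ℝ × ℝ) Prod.instMeasurableSpace κ Prod.fst measurable_fst) a
        (Prod.mk a ⁻¹' {q : (ℝ × ℝ) × ℝ | q.2 ≤ q.1.2}))
        = fun a : ℝ × ℝ => κ a.1 (Set.Iic a.2) := by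
      funext a
      have hpre2 : Prod.mk a ⁻¹' {q : (ℝ × ℝ) × ℝ | q.2 ≤ q.1.2} = Set.Iic a.2 := by
        ext z
        simp [Set.mem_Iic]
      show κ a.1 (Prod.mk a ⁻¹' {q : (ℝ × ℝ) × ℝ | q.2 ≤ q.1.2}) = κ a.1 (Set.Iic a.2)
      rw [hpre2]
    rw [heqf] at h
    exact h.ennreal_toReal
  set H : ℝ → ℝ := fun y => (ν (Set.Iic y)).toReal with hHdef
  have hpairmeas : Measurable fun ω => (X ω, Y ω) := hX.prodMk hY
  have hmarg : ∀ y, ∫ x, F x y ∂μ = H y := by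
    intro y
    have h0 := hκ Set.univ (Set.Iic y) MeasurableSet.univ measurableSet_Iic
    rw [Measure.map_apply hpairmeas (MeasurableSet.univ.prod measurableSet_Iic)] at h0
    have hpre : (fun ω => (X ω, Y ω)) ⁻¹' (Set.univ ×ˢ Set.Iic y) = Y ⁻¹' Set.Iic y := by
      ext ω; simp
    rw [hpre, Measure.restrict_univ] at h0
    have hν0 : ν (Set.Iic y) = P (Y ⁻¹' Set.Iic y) := Measure.map_apply hY measurableSet_Iic
    have hint := integral_toReal
      ((Kernel.measurable_coe κ measurableSet_Iic).aemeasurable (μ := μ))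
      (Filter.Eventually.of_forall fun x => lt_of_le_of_lt (hκ1 x y) ENNReal.one_lt_top)
    calc ∫ x, F x y ∂μ = (∫⁻ x, κ x (Set.Iic y) ∂μ).toReal := hint
      _ = (P (Y ⁻¹' Set.Iic y)).toReal := by rw [h0]
      _ = H y := by rw [hHdef]; simp only; rw [hν0]
  have hφs : 0 < φ 1 + φ (-1) := by
    have := hφstrict 1 one_pos le_rfl
    rw [hφ0] at this
    linarith
  have hφcont : ContinuousOn φ (Set.Ioo (-1:ℝ) 1) := by
    have := hφ.continuousOn_interior
    rwa [interior_Icc] at this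
  -- THE ANALYTIC CORE
  have hkey : ∀ᵐ y ∂ν, μ {x | F x y ∈ Set.Ioo (0:ℝ) 1} = 0 := by
    set C : ℝ := |φ 1| + |φ (-1)| with hCdef
    have m1 : Measurable fun q : (ℝ × ℝ) × ℝ => F q.1.1 q.2 :=
      hFj.comp ((measurable_fst.fst).prodMk measurable_snd)
    have m2 : Measurable fun q : (ℝ × ℝ) × ℝ => F q.1.2 q.2 :=
      hFj.comp ((measurable_fst.snd).prodMk measurable_snd)
    have hdmem : ∀ q : (ℝ × ℝ) × ℝ, F q.1.1 q.2 - F q.1.2 q.2 ∈ Set.Icc (-1:ℝ) 1 := by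
      intro q
      have h1 := hFrange q.1.1 q.2
      have h2 := hFrange q.1.2 q.2
      constructor
      · linarith [h1.1, h2.2]
      · linarith [h1.2, h2.1]
    have mφ : Measurable fun q : (ℝ × ℝ) × ℝ => φ (F q.1.1 q.2 - F q.1.2 q.2) :=
      measurable_phi_comp hφcont (m1.sub m2) hdmem
    have mΨ : Measurable fun q : (ℝ × ℝ) × ℝ =>
        F q.1.1 q.2 * (1 - F q.1.2 q.2) * φ 1 + F q.1.2 q.2 * (1 - F q.1.1 q.2) * φ (-1) :=
      ((m1.mul (measurable_const.sub m2)).mul_const _).add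
        ((m2.mul (measurable_const.sub m1)).mul_const _)
    set q1 : (ℝ × ℝ) × ℝ → ℝ := fun q =>
      (F q.1.1 q.2 * (1 - F q.1.2 q.2) * φ 1 + F q.1.2 q.2 * (1 - F q.1.1 q.2) * φ (-1))
        - φ (F q.1.1 q.2 - F q.1.2 q.2) with hq1def
    have hq1meas : Measurable q1 := mΨ.sub mφ
    have hq1nonneg : ∀ q, 0 ≤ q1 q := by
      intro q
      have := key2 hφ hφ0 (hFrange q.1.1 q.2) (hFrange q.1.2 q.2)
      rw [hq1def]
      simp only
      linarith
    have hΨint : Integrable (fun q : (ℝ × ℝ) × ℝ =>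
        F q.1.1 q.2 * (1 - F q.1.2 q.2) * φ 1 + F q.1.2 q.2 * (1 - F q.1.1 q.2) * φ (-1))
        ((μ.prod μ).prod ν) :=
      int_of_bdd mΨ.aestronglyMeasurable
        (fun q => psi_bound (hFrange q.1.1 q.2) (hFrange q.1.2 q.2))
    have hφint : Integrable (fun q : (ℝ × ℝ) × ℝ => φ (F q.1.1 q.2 - F q.1.2 q.2))
        ((μ.prod μ).prod ν) :=
      int_of_bdd mφ.aestronglyMeasurable (fun q => phi_bound hφ hφ0 (hdmem q))
    have hq1int : Integrable q1 ((μ.prod μ).prod ν) := hΨint.sub hφint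
    have hs1 : ∫ p : ℝ × ℝ, (∫ y, (F p.1 y * (1 - F p.2 y) * φ 1
          + F p.2 y * (1 - F p.1 y) * φ (-1)) ∂ν) ∂(μ.prod μ)
        = ∫ q : (ℝ × ℝ) × ℝ, (F q.1.1 q.2 * (1 - F q.1.2 q.2) * φ 1
            + F q.1.2 q.2 * (1 - F q.1.1 q.2) * φ (-1)) ∂((μ.prod μ).prod ν) :=
      integral_integral (f := fun (p : ℝ × ℝ) (y : ℝ) =>
        F p.1 y * (1 - F p.2 y) * φ 1 + F p.2 y * (1 - F p.1 y) * φ (-1)) (by exact hΨint)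
    have hs2 : ∫ p : ℝ × ℝ, (∫ y, φ (F p.1 y - F p.2 y) ∂ν) ∂(μ.prod μ)
        = ∫ q : (ℝ × ℝ) × ℝ, φ (F q.1.1 q.2 - F q.1.2 q.2) ∂((μ.prod μ).prod ν) :=
      integral_integral (f := fun (p : ℝ × ℝ) (y : ℝ) => φ (F p.1 y - F p.2 y))
        (by exact hφint)
    have hJ : ∫ p : ℝ × ℝ, (∫ y, (F p.1 y * (1 - F p.2 y) * φ 1
          + F p.2 y * (1 - F p.1 y) * φ (-1)) ∂ν) ∂(μ.prod μ)
        = (φ 1 + φ (-1)) * ∫ y, H y * (1 - H y) ∂ν :=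
      struct hFj hFrange hmarg (φ 1) (φ (-1))
    have hR : (∫ p : ℝ × ℝ, (∫ y, φ ((if p.1 ≤ y then (1 : ℝ) else 0)
          - (if p.2 ≤ y then (1 : ℝ) else 0)) ∂ν) ∂(ν.prod ν))
        = (φ 1 + φ (-1)) * ∫ y, H y * (1 - H y) ∂ν := by
      have hpt : ∀ (p : ℝ × ℝ) (y : ℝ), φ ((if p.1 ≤ y then (1 : ℝ) else 0)
          - (if p.2 ≤ y then (1 : ℝ) else 0))
          = (if p.1 ≤ y then (1 : ℝ) else 0) * (1 - (if p.2 ≤ y then (1 : ℝ) else 0)) * φ 1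
            + (if p.2 ≤ y then (1 : ℝ) else 0) * (1 - (if p.1 ≤ y then (1 : ℝ) else 0)) * φ (-1) := by
        intro p y
        by_cases h1 : p.1 ≤ y <;> by_cases h2 : p.2 ≤ y <;> simp [h1, h2, hφ0]
      simp only [hpt]
      have hGm : Measurable fun p : ℝ × ℝ => (if p.1 ≤ p.2 then (1:ℝ) else 0) :=
        Measurable.ite (measurableSet_le measurable_fst measurable_snd)
          measurable_const measurable_const
      have hGr : ∀ (c y : ℝ), (if c ≤ y then (1:ℝ) else 0) ∈ Set.Icc (0:ℝ) 1 := by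
        intro c y; split <;> simp
      have hGH : ∀ y, ∫ c, (if c ≤ y then (1:ℝ) else 0) ∂ν = H y := by
        intro y
        have hind : (fun c => if c ≤ y then (1:ℝ) else 0)
            = Set.indicator (Set.Iic y) (fun _ => (1:ℝ)) := by
          funext c
          rw [Set.indicator_apply]
          simp [Set.mem_Iic]
        rw [hind, integral_indicator_const _ measurableSet_Iic]
        rw [hHdef]
        simp
        rfl
      exact struct hGm hGr hGH (φ 1) (φ (-1))
    have hzero : ∫ q, q1 q ∂((μ.prod μ).prod ν) = 0 := by
      have hsplit : ∫ q, q1 q ∂((μ.prod μ).prod ν)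
          = (∫ q : (ℝ × ℝ) × ℝ, (F q.1.1 q.2 * (1 - F q.1.2 q.2) * φ 1
              + F q.1.2 q.2 * (1 - F q.1.1 q.2) * φ (-1)) ∂((μ.prod μ).prod ν))
            - ∫ q : (ℝ × ℝ) × ℝ, φ (F q.1.1 q.2 - F q.1.2 q.2) ∂((μ.prod μ).prod ν) :=
        integral_sub hΨint hφint
      have hLR : ∫ p : ℝ × ℝ, (∫ y, φ (F p.1 y - F p.2 y) ∂ν) ∂(μ.prod μ)
          = (φ 1 + φ (-1)) * ∫ y, H y * (1 - H y) ∂ν := by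
        have hLagree : (∫ p : ℝ × ℝ, (∫ y, φ (F p.1 y - F p.2 y) ∂ν) ∂(μ.prod μ))
            = ∫ x : ℝ × ℝ, (∫ y, φ ((κ x.1 (Set.Iic y)).toReal
                - (κ x.2 (Set.Iic y)).toReal) ∂ν) ∂(μ.prod μ) := rfl
        rw [hLagree, heq, hR]
      rw [hsplit, ← hs1, ← hs2, hJ, hLR]
      ring
    have hae : ∀ᵐ q ∂((μ.prod μ).prod ν), q1 q = 0 := by
      have := (integral_eq_zero_iff_of_nonneg hq1nonneg hq1int).mp hzero
      filter_upwards [this] with q hq using hq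
    have hNmeas : MeasurableSet {q : (ℝ × ℝ) × ℝ | q1 q ≠ 0} :=
      (hq1meas (measurableSet_singleton 0)).compl
    have hNnull : ((μ.prod μ).prod ν) {q : (ℝ × ℝ) × ℝ | q1 q ≠ 0} = 0 :=
      ae_iff.mp hae
    have hSmeas : MeasurableSet {z : ℝ × (ℝ × ℝ) | q1 (z.2, z.1) ≠ 0} := by
      have : Measurable fun z : ℝ × (ℝ × ℝ) => q1 (z.2, z.1) :=
        hq1meas.comp (measurable_snd.prodMk measurable_fst)
      exact (this (measurableSet_singleton 0)).compl
    have hswap : (ν.prod (μ.prod μ)) {z : ℝ × (ℝ × ℝ) | q1 (z.2, z.1) ≠ 0} = 0 := by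
      rw [← Measure.prod_swap, Measure.map_apply measurable_swap hSmeas]
      have hpre : Prod.swap ⁻¹' {z : ℝ × (ℝ × ℝ) | q1 (z.2, z.1) ≠ 0}
          = {q : (ℝ × ℝ) × ℝ | q1 q ≠ 0} := by
        ext q
        simp [Prod.swap]
      rw [hpre]
      exact hNnull
    have hsec := (Measure.measure_prod_null hSmeas).mp hswap
    rw [Filter.EventuallyEq] at hsec
    filter_upwards [hsec] with y hy
    have hy' : (μ.prod μ) {p : ℝ × ℝ | q1 (p, y) ≠ 0} = 0 := by
      have : Prod.mk y ⁻¹' {z : ℝ × (ℝ × ℝ) | q1 (z.2, z.1) ≠ 0}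
          = {p : ℝ × ℝ | q1 (p, y) ≠ 0} := by
        ext p; simp
      rw [← this]
      simpa using hy
    have hsub : {x | F x y ∈ Set.Ioo (0:ℝ) 1} ×ˢ {x | F x y ∈ Set.Ioo (0:ℝ) 1}
        ⊆ {p : ℝ × ℝ | q1 (p, y) ≠ 0} := by
      intro p hp
      rw [Set.mem_prod] at hp
      obtain ⟨hx1, hx2⟩ := hp
      have hk3 := key3 hφ hφ0 hφs hx1 hx2
      have : 0 < q1 ((p.1, p.2), y) := by
        rw [hq1def]
        simp only
        linarith
      show q1 (p, y) ≠ 0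
      exact ne_of_gt this
    have h2 : (μ.prod μ) ({x | F x y ∈ Set.Ioo (0:ℝ) 1} ×ˢ {x | F x y ∈ Set.Ioo (0:ℝ) 1}) = 0 :=
      measure_mono_null hsub hy'
    rw [Measure.prod_prod] at h2
    exact mul_self_eq_zero.mp h2
  -- PART D: construct f
  obtain ⟨G', hG'meas, hG'null, hG'good⟩ : ∃ G' : Set ℝ, MeasurableSet G' ∧ ν G'ᶜ = 0 ∧
      ∀ y ∈ G', μ {x | F x y ∈ Set.Ioo (0:ℝ) 1} = 0 := by
    set N := {y | ¬ μ {x | F x y ∈ Set.Ioo (0:ℝ) 1} = 0} with hNdef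
    have hN : ν N = 0 := ae_iff.mp hkey
    refine ⟨(toMeasurable ν N)ᶜ, (measurableSet_toMeasurable ν N).compl, ?_, ?_⟩
    · rw [compl_compl, measure_toMeasurable]
      exact hN
    · intro y hy
      by_contra h
      exact hy (subset_toMeasurable ν N h)
  obtain ⟨D, hDsub, hDcnt, hDdense⟩ := exists_countable_right_dense G'
  have hG'ne : G'.Nonempty := by
    by_contra h
    rw [Set.not_nonempty_iff_eq_empty] at h
    rw [h, Set.compl_empty] at hG'null
    have : (1 : ℝ≥0∞) = 0 := by rw [← measure_univ (μ := ν), hG'null]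
    simp at this
  have hDne : D.Nonempty := by
    obtain ⟨c, hc⟩ := hG'ne
    obtain ⟨x, hx, _, _⟩ := hDdense c hc 1 one_pos
    exact ⟨x, hx⟩
  obtain ⟨e, he⟩ := Set.Countable.exists_eq_range hDcnt hDne
  set A : ℝ → Set ℝ := fun y => {x | κ x (Set.Iic y) = 1} with hAdef
  have hAmeas : ∀ y, MeasurableSet (A y) :=
    fun y => (Kernel.measurable_coe κ measurableSet_Iic) (measurableSet_singleton 1)
  have claim1 : ∀ y : ℝ, μ {x | F x y ∈ Set.Ioo (0:ℝ) 1} = 0 →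
      ∀ᵐ ω ∂P, (Y ω ≤ y ↔ X ω ∈ A y) := by
    intro y hSy
    have hae0 : ∀ᵐ x ∂μ, x ∉ A y → κ x (Set.Iic y) = 0 := by
      have haen : ∀ᵐ x ∂μ, x ∉ {x | F x y ∈ Set.Ioo (0:ℝ) 1} :=
        measure_eq_zero_iff_ae_notMem.mp hSy
      filter_upwards [haen] with x hx hxA
      by_contra h0
      apply hx
      constructor
      · exact ENNReal.toReal_pos h0 (hκfin x y)
      · rcases lt_or_eq_of_le (hκ1 x y) with h | h
        · have := ENNReal.toReal_strict_mono ENNReal.one_ne_top h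
          simpa using this
        · exact absurd h hxA
    have n1 : P {ω | Y ω ≤ y ∧ X ω ∉ A y} = 0 := by
      have hpre : {ω | Y ω ≤ y ∧ X ω ∉ A y}
          = (fun ω => (X ω, Y ω)) ⁻¹' ((A y)ᶜ ×ˢ Set.Iic y) := by
        ext ω
        simp [Set.mem_prod, and_comm]
      rw [hpre, ← Measure.map_apply hpairmeas (((hAmeas y).compl).prod measurableSet_Iic),
        hκ _ _ (hAmeas y).compl measurableSet_Iic]
      have hzero2 : ∫⁻ x in (A y)ᶜ, κ x (Set.Iic y) ∂μ = ∫⁻ x in (A y)ᶜ, 0 ∂μ := by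
        apply lintegral_congr_ae
        show ∀ᵐ x ∂μ.restrict (A y)ᶜ, κ x (Set.Iic y) = 0
        rw [ae_restrict_iff' (hAmeas y).compl]
        filter_upwards [hae0] with x hx hxc
        exact hx hxc
      rw [hzero2]
      simp
    have n2 : P {ω | X ω ∈ A y ∧ ¬ Y ω ≤ y} = 0 := by
      have hpre : {ω | X ω ∈ A y ∧ ¬ Y ω ≤ y}
          = (fun ω => (X ω, Y ω)) ⁻¹' ((A y) ×ˢ (Set.Iic y)ᶜ) := by
        ext ω
        simp [Set.mem_prod]
      rw [hpre, ← Measure.map_apply hpairmeas ((hAmeas y).prod measurableSet_Iic.compl),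
        hκ _ _ (hAmeas y) measurableSet_Iic.compl]
      have hzero2 : ∫⁻ x in A y, κ x ((Set.Iic y)ᶜ) ∂μ = ∫⁻ x in A y, 0 ∂μ := by
        apply lintegral_congr_ae
        show ∀ᵐ x ∂μ.restrict (A y), κ x ((Set.Iic y)ᶜ) = 0
        rw [ae_restrict_iff' (hAmeas y)]
        apply Filter.Eventually.of_forall
        intro x hx
        have h1 : κ x (Set.Iic y) = 1 := hx
        rw [measure_compl measurableSet_Iic (hκfin x y), h1]
        simp
      rw [hzero2]
      simp
    have hun : P ({ω | Y ω ≤ y ∧ X ω ∉ A y} ∪ {ω | X ω ∈ A y ∧ ¬ Y ω ≤ y}) = 0 :=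
      measure_union_null n1 n2
    have := measure_eq_zero_iff_ae_notMem.mp hun
    filter_upwards [this] with ω hω
    simp only [Set.mem_union, Set.mem_setOf_eq] at hω
    push_neg at hω
    exact ⟨hω.1, hω.2⟩
  have hiff : ∀ n : ℕ, ∀ᵐ ω ∂P, (Y ω ≤ e n ↔ X ω ∈ A (e n)) := by
    intro n
    apply claim1
    apply hG'good
    apply hDsub
    rw [he]
    exact ⟨n, rfl⟩
  have hYG' : ∀ᵐ ω ∂P, Y ω ∈ G' := by
    have hp : P (Y ⁻¹' G'ᶜ) = 0 := by
      rw [← Measure.map_apply hY hG'meas.compl]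
      exact hG'null
    have := measure_eq_zero_iff_ae_notMem.mp hp
    filter_upwards [this] with ω h
    simpa using h
  set g : ℝ → EReal := fun x => ⨅ n : ℕ, (if x ∈ A (e n) then ((e n : ℝ) : EReal) else ⊤)
    with hgdef
  have hgm : Measurable g :=
    Measurable.iInf fun n => Measurable.ite (hAmeas (e n)) measurable_const measurable_const
  refine ⟨fun x => (g x).toReal, hgm.ereal_toReal, ?_⟩
  have hall := (MeasureTheory.ae_all_iff).mpr hiff
  filter_upwards [hall, hYG'] with ω h1 h2
  have hgX : g (X ω) = ((Y ω : ℝ) : EReal) := by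
    have hterm : ∀ n : ℕ, (if X ω ∈ A (e n) then ((e n : ℝ) : EReal) else ⊤)
        = (if Y ω ≤ e n then ((e n : ℝ) : EReal) else ⊤) := by
      intro n
      by_cases h : Y ω ≤ e n
      · rw [if_pos ((h1 n).mp h), if_pos h]
      · rw [if_neg (fun hx => h ((h1 n).mpr hx)), if_neg h]
    rw [hgdef]
    simp only [hterm]
    apply le_antisymm
    · by_contra hlt
      push_neg at hlt
      obtain ⟨z, hz1, hz2⟩ := EReal.lt_iff_exists_real_btwn.mp hlt
      have hcz : Y ω < z := by exact_mod_cast hz1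
      obtain ⟨q, hqD, hq1, hq2⟩ := hDdense (Y ω) h2 (z - Y ω) (by linarith)
      obtain ⟨n, hn⟩ : ∃ n, e n = q := by
        have : q ∈ Set.range e := by rw [← he]; exact hqD
        exact this
      have hle : (⨅ n : ℕ, (if Y ω ≤ e n then ((e n : ℝ) : EReal) else ⊤))
          ≤ ((q : ℝ) : EReal) := by
        have hYq : Y ω ≤ e n := by rw [hn]; exact hq1
        have heval : (if Y ω ≤ e n then ((e n : ℝ) : EReal) else ⊤) = ((q : ℝ) : EReal) := by
          rw [if_pos hYq, hn]
        exact le_trans (iInf_le _ n) (le_of_eq heval)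
      have hqz : ((q : ℝ) : EReal) < ((z : ℝ) : EReal) := by
        exact_mod_cast (by linarith : q < z)
      have : ((z : ℝ) : EReal) < ((z : ℝ) : EReal) :=
        lt_of_lt_of_le hz2 (le_trans hle hqz.le)
      exact lt_irrefl _ this
    · apply le_iInf
      intro n
      by_cases h : Y ω ≤ e n
      · rw [if_pos h]
        exact_mod_cast h
      · rw [if_neg h]
        exact le_top
  show Y ω = (g (X ω)).toReal
  rw [hgX, EReal.toReal_coe]
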